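/- Let k be a field, n ≥ 1, and let T_n(k) be the algebra of upper triangular n × n matrices over k. For every group G and every map m : {1,…,n−1} → G there exists a grading of T_n(k) by G in which every elementary matrix E_{ij} with i ≤ j is homogeneous, with deg E_{ii} = 1 and deg E_{ij} = m(i)·m(i+1)⋯m(j−1) for i < j. Moreover, in any grading of T_n(k) in which all elementary matrices E_{ij} (i ≤ j) are homogeneous, the diagonal idempotents E_{ii} necessarily have trivial degree and the grading is completely determined by the degrees of the matrices E_{i,i+1}; such a grading is connected if and only if the image of m generates G. -/

import Mathlib

open Matrix
set_option synthInstance.maxHeartbeats 1000000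

/-- The subalgebra `T_n(k)` of upper triangular `n × n` matrices. -/
def upperTriang (k : Type*) [Field k] (n : ℕ) :
    Subalgebra k (Matrix (Fin n) (Fin n) k) where
  carrier := {M | ∀ i j : Fin n, j < i → M i j = 0}
  add_mem' := fun {M N} hM hN i j hij => by
    simp [Matrix.add_apply, hM i j hij, hN i j hij]
  zero_mem' := fun i j _ => rfl
  mul_mem' := fun {M N} hM hN i j hij => by
    rw [Matrix.mul_apply]
    refine Finset.sum_eq_zero fun l _ => ?_
    rcases lt_or_ge l i with h | h
    · rw [hM i l h, zero_mul]
    · rw [hN l j (lt_of_lt_of_le hij h), mul_zero]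
  one_mem' := fun i j hij => Matrix.one_apply_ne hij.ne'
  algebraMap_mem' := fun r i j hij => by
    rw [Matrix.algebraMap_eq_diagonal]
    exact Matrix.diagonal_apply_ne _ hij.ne'

/-- The elementary matrix `E_{ij}` (with `i ≤ j`) as an element of `T_n(k)`. -/
def triE (k : Type*) [Field k] (n : ℕ) (i j : Fin n) (hij : i ≤ j) :
    upperTriang k n :=
  ⟨Matrix.single i j (1 : k), fun a b hba => by
    refine Matrix.single_apply_of_ne _ _ _ _ _ fun h => ?_
    rcases h with ⟨rfl, rfl⟩
    exact absurd hij (not_le.mpr hba)⟩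

/-- Increasing cumulative product: `cumUp m j = m 0 * m 1 * ⋯ * m (j-1)`, so that
`(cumUp m i)⁻¹ * cumUp m j = m i * m (i+1) * ⋯ * m (j-1)` for `i ≤ j`. -/
def cumUp {G : Type*} [Group G] (m : ℕ → G) : ℕ → G
  | 0 => 1
  | (j + 1) => cumUp m j * m j

/-- The telescoping product `chainUp d i j = d i (i+1) * d (i+1) (i+2) * ⋯ * d (j-1) j`. -/
def chainUp {G : Type*} [Group G] (d : ℕ → ℕ → G) (i j : ℕ) : G :=
  ((List.range' i (j - i)).map (fun t => d t (t + 1))).prod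

section Aux

variable {k : Type*} [Field k] {n : ℕ} {G : Type*} [Group G]

lemma triE_coe (i j : Fin n) (hij : i ≤ j) :
    ((triE k n i j hij : upperTriang k n) : Matrix (Fin n) (Fin n) k)
      = Matrix.single i j (1 : k) := rfl

lemma triE_ne_zero (i j : Fin n) (hij : i ≤ j) : triE k n i j hij ≠ 0 := by
  intro h
  have := congrArg (fun x : upperTriang k n => (x : Matrix (Fin n) (Fin n) k) i j) h
  simp [triE_coe] at this

lemma triE_mul (i j l : Fin n) (hij : i ≤ j) (hjl : j ≤ l) :
    triE k n i j hij * triE k n j l hjl = triE k n i l (hij.trans hjl) := by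
  apply Subtype.ext
  show Matrix.single i j (1 : k) * Matrix.single j l 1
      = Matrix.single i l 1
  rw [Matrix.single_mul_single_same, one_mul]

/-- In an independent family, a nonzero element lies in at most one piece. -/
lemma degree_unique {X : G → Submodule k (upperTriang k n)}
    (hind : iSupIndep X) {x : upperTriang k n} (hx : x ≠ 0) {g h : G}
    (hg : x ∈ X g) (hh : x ∈ X h) : g = h := by
  by_contra hne
  have hne' : h ≠ g := fun hc => hne hc.symm
  have h1 : X h ≤ ⨆ j, ⨆ _ : j ≠ g, X j := le_iSup_of_le h (le_iSup_of_le hne' le_rfl)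
  have h2 : x ∈ X g ⊓ (⨆ j, ⨆ _ : j ≠ g, X j) := ⟨hg, h1 hh⟩
  exact hx ((Submodule.mem_bot k).mp ((iSupIndep_def.mp hind g).le_bot h2))

variable (k n)

/-- The homogeneous piece of degree `g` for the degree function `Δ`. -/
def gradeX (Δ : Fin n → Fin n → G) (g : G) : Submodule k (upperTriang k n) where
  carrier := {M | ∀ i j : Fin n, Δ i j ≠ g →
    (M : Matrix (Fin n) (Fin n) k) i j = 0}
  add_mem' := fun {M N} hM hN i j hij => by
    simp [Matrix.add_apply, hM i j hij, hN i j hij]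
  zero_mem' := fun i j _ => rfl
  smul_mem' := fun c M hM i j hij => by
    simp [Matrix.smul_apply, hM i j hij]

lemma mem_gradeX {Δ : Fin n → Fin n → G} {g : G} {M : upperTriang k n} :
    M ∈ gradeX k n Δ g ↔ ∀ i j : Fin n, Δ i j ≠ g →
      (M : Matrix (Fin n) (Fin n) k) i j = 0 := Iff.rfl

lemma triE_mem_gradeX (Δ : Fin n → Fin n → G) (i j : Fin n) (hij : i ≤ j) :
    triE k n i j hij ∈ gradeX k n Δ (Δ i j) := by
  intro a b hab
  rw [triE_coe]
  refine Matrix.single_apply_of_ne _ _ _ _ _ fun h => ?_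
  rcases h with ⟨rfl, rfl⟩
  exact hab rfl

lemma gradeX_indep (Δ : Fin n → Fin n → G) : iSupIndep (gradeX k n Δ) := by
  rw [iSupIndep_def]
  intro g
  rw [disjoint_iff_inf_le]
  have hY : (⨆ h, ⨆ _ : h ≠ g, gradeX k n Δ h) ≤
      { carrier := {M : upperTriang k n | ∀ i j : Fin n, Δ i j = g →
          (M : Matrix (Fin n) (Fin n) k) i j = 0}
        add_mem' := fun {M N} hM hN i j hij => by
          simp [Matrix.add_apply, hM i j hij, hN i j hij]
        zero_mem' := fun i j _ => rfl
        smul_mem' := fun c M hM i j hij => by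
          simp [Matrix.smul_apply, hM i j hij] } := by
    refine iSup₂_le fun h hne => fun M hM i j hij => ?_
    exact hM i j (by rw [hij]; exact Ne.symm hne)
  intro M hM
  have h1 := hM.1
  have h2 := hY hM.2
  rw [Submodule.mem_bot]
  apply Subtype.ext
  apply Matrix.ext
  intro i j
  by_cases hc : Δ i j = g
  · simpa using h2 i j hc
  · simpa using h1 i j hc

lemma gradeX_sup (Δ : Fin n → Fin n → G) : (⨆ g, gradeX k n Δ g) = ⊤ := by
  rw [eq_top_iff]
  intro M _
  have hM : M = ∑ p : Fin n × Fin n,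
      (if hp : p.1 ≤ p.2 then
        ((M : Matrix (Fin n) (Fin n) k) p.1 p.2) • triE k n p.1 p.2 hp else 0) := by
    apply Subtype.ext
    apply Matrix.ext
    intro a b
    have hcoe : ((∑ p : Fin n × Fin n,
        (if hp : p.1 ≤ p.2 then
          ((M : Matrix (Fin n) (Fin n) k) p.1 p.2) • triE k n p.1 p.2 hp else 0) :
          upperTriang k n) : Matrix (Fin n) (Fin n) k) a b
        = ∑ p : Fin n × Fin n,
          (((if hp : p.1 ≤ p.2 then
            ((M : Matrix (Fin n) (Fin n) k) p.1 p.2) • triE k n p.1 p.2 hp else 0) :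
            upperTriang k n) : Matrix (Fin n) (Fin n) k) a b := by
      rw [AddSubmonoidClass.coe_finset_sum, Matrix.sum_apply]
    rw [hcoe]
    rw [Finset.sum_eq_single_of_mem (a, b) (Finset.mem_univ _)]
    · by_cases hab : a ≤ b
      · simp [hab, triE_coe]
      · have : (M : Matrix (Fin n) (Fin n) k) a b = 0 := M.2 a b (not_le.mp hab)
        simp [hab, this]
    · intro p _ hpne
      by_cases hp : p.1 ≤ p.2
      · rw [dif_pos hp]
        have : ((((M : Matrix (Fin n) (Fin n) k) p.1 p.2) • triE k n p.1 p.2 hp :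
            upperTriang k n) : Matrix (Fin n) (Fin n) k) a b
            = ((M : Matrix (Fin n) (Fin n) k) p.1 p.2) •
              (Matrix.single p.1 p.2 (1 : k)) a b := by
          rw [show (((((M : Matrix (Fin n) (Fin n) k) p.1 p.2) • triE k n p.1 p.2 hp :
            upperTriang k n)) : Matrix (Fin n) (Fin n) k)
              = ((M : Matrix (Fin n) (Fin n) k) p.1 p.2) •
                (triE k n p.1 p.2 hp : Matrix (Fin n) (Fin n) k) from rfl]
          rfl
        rw [this]
        rw [Matrix.single_apply_of_ne _ _ _ _ _
          (fun h => hpne (Prod.ext h.1 h.2))]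
        simp
      · simp [hp]
  rw [hM]
  refine Submodule.sum_mem _ fun p _ => ?_
  by_cases hp : p.1 ≤ p.2
  · rw [dif_pos hp]
    exact Submodule.smul_mem _ _
      ((le_iSup (gradeX k n Δ) (Δ p.1 p.2)) (triE_mem_gradeX k n Δ p.1 p.2 hp))
  · rw [dif_neg hp]; exact Submodule.zero_mem _

lemma gradeX_mul {Δ : Fin n → Fin n → G}
    (hΔ : ∀ i l j : Fin n, Δ i l * Δ l j = Δ i j) (g h : G) :
    gradeX k n Δ g * gradeX k n Δ h ≤ gradeX k n Δ (g * h) := by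
  rw [Submodule.mul_le]
  intro x hx y hy i j hij
  have : ((x * y : upperTriang k n) : Matrix (Fin n) (Fin n) k) i j
      = ∑ l : Fin n, (x : Matrix (Fin n) (Fin n) k) i l *
          (y : Matrix (Fin n) (Fin n) k) l j := by
    rw [show ((x * y : upperTriang k n) : Matrix (Fin n) (Fin n) k)
        = (x : Matrix (Fin n) (Fin n) k) * (y : Matrix (Fin n) (Fin n) k) from rfl,
      Matrix.mul_apply]
  rw [this]
  refine Finset.sum_eq_zero fun l _ => ?_
  by_cases hxl : Δ i l = g
  · have hyl : Δ l j ≠ h := fun hc => hij (by rw [← hΔ i l j, hxl, hc])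
    rw [hy l j hyl, mul_zero]
  · rw [hx i l hxl, zero_mul]

end Aux

/-- For every group `G` and every `m : {1,…,n−1} → G` there is a good grading of `T_n(k)`
with `deg E_{ii} = 1` and `deg E_{ij} = m(i)·m(i+1)⋯m(j−1)` for `i < j`, connected iff the
image of `m` generates `G`.  Moreover, in any grading of `T_n(k)` with all `E_{ij}`
(`i ≤ j`) homogeneous, the diagonal idempotents `E_{ii}` have trivial degree and the
grading is determined by the degrees of the `E_{i,i+1}`:
`deg E_{ij} = deg E_{i,i+1} ⋯ deg E_{j-1,j}`. -/
theorem stmt15 (k : Type*) [Field k] (n : ℕ) (hn : 1 ≤ n) (G : Type*) [Group G]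
    (m : Fin (n - 1) → G) :
    (∃ X : G → Submodule k (upperTriang k n),
      iSupIndep X ∧ (⨆ g, X g) = ⊤ ∧
      (∀ g h, X g * X h ≤ X (g * h)) ∧
      (∀ (i j : Fin n) (hij : i ≤ j),
        triE k n i j hij ∈
          X ((cumUp (fun t => if h : t < n - 1 then m ⟨t, h⟩ else 1) (i : ℕ))⁻¹ *
            cumUp (fun t => if h : t < n - 1 then m ⟨t, h⟩ else 1) (j : ℕ))) ∧
      (Subgroup.closure {g | X g ≠ ⊥} = ⊤ ↔ Subgroup.closure (Set.range m) = ⊤)) ∧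
    (∀ X : G → Submodule k (upperTriang k n),
      iSupIndep X → (⨆ g, X g) = ⊤ → (∀ g h, X g * X h ≤ X (g * h)) →
      ∀ d : ℕ → ℕ → G,
        (∀ (i j : Fin n) (hij : i ≤ j), triE k n i j hij ∈ X (d (i : ℕ) (j : ℕ))) →
        (∀ i : Fin n, d (i : ℕ) (i : ℕ) = 1) ∧
        (∀ i j : Fin n, i ≤ j → d (i : ℕ) (j : ℕ) = chainUp d (i : ℕ) (j : ℕ))) := by
  constructor
  · -- Existence
    set f : ℕ → G := fun t => if h : t < n - 1 then m ⟨t, h⟩ else 1 with hf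
    set c : ℕ → G := cumUp f with hc
    set Δ : Fin n → Fin n → G := fun i j => (c (i : ℕ))⁻¹ * c (j : ℕ) with hΔdef
    have hΔ : ∀ i l j : Fin n, Δ i l * Δ l j = Δ i j := by
      intro i l j; simp [hΔdef, mul_assoc]
    refine ⟨gradeX k n Δ, gradeX_indep k n Δ, gradeX_sup k n Δ,
      gradeX_mul k n hΔ, fun i j hij => triE_mem_gradeX k n Δ i j hij, ?_⟩
    have hcum : ∀ t : ℕ, c t ∈ Subgroup.closure (Set.range m) := by
      intro t
      induction t with
      | zero => exact Subgroup.one_mem _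
      | succ t ih =>
        refine Subgroup.mul_mem _ ih ?_
        by_cases ht : t < n - 1
        · exact Subgroup.subset_closure ⟨⟨t, ht⟩, by simp [hf, ht]⟩
        · simp only [hf, dif_neg ht]
          exact Subgroup.one_mem _
    have hcl : Subgroup.closure {g | gradeX k n Δ g ≠ ⊥}
        = Subgroup.closure (Set.range m) := by
      apply le_antisymm
      · rw [Subgroup.closure_le]
        intro g hg
        rw [Set.mem_setOf_eq, Submodule.ne_bot_iff] at hg
        obtain ⟨M, hM, hM0⟩ := hg
        have : ∃ i j : Fin n, (M : Matrix (Fin n) (Fin n) k) i j ≠ 0 := by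
          by_contra hc0
          push_neg at hc0
          exact hM0 (Subtype.ext (Matrix.ext fun i j => hc0 i j))
        obtain ⟨i, j, hij0⟩ := this
        have hΔg : Δ i j = g := by
          by_contra hc1
          exact hij0 (hM i j hc1)
        rw [← hΔg]
        exact Subgroup.mul_mem _ (Subgroup.inv_mem _ (hcum i)) (hcum j)
      · rw [Subgroup.closure_le]
        rintro g ⟨t, rfl⟩
        have ht1 : (t : ℕ) < n - 1 := t.2
        have hi : (t : ℕ) < n := by omega
        have hj : (t : ℕ) + 1 < n := by omega
        set i : Fin n := ⟨t, hi⟩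
        set j : Fin n := ⟨(t : ℕ) + 1, hj⟩
        have hijle : i ≤ j := by
          rw [Fin.le_def]; exact Nat.le_succ _
        have hΔij : Δ i j = m t := by
          show (c (t : ℕ))⁻¹ * c ((t : ℕ) + 1) = m t
          rw [show c ((t : ℕ) + 1) = c (t : ℕ) * f (t : ℕ) from rfl]
          rw [inv_mul_cancel_left]
          simp [hf, ht1]
        apply Subgroup.subset_closure
        rw [Set.mem_setOf_eq, ← hΔij, Submodule.ne_bot_iff]
        exact ⟨triE k n i j hijle, triE_mem_gradeX k n Δ i j hijle,
          triE_ne_zero i j hijle⟩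
    rw [hcl]
  · -- Uniqueness of degrees
    intro X hind _ hmul d hd
    have hdiag : ∀ i : Fin n, d (i : ℕ) (i : ℕ) = 1 := by
      intro i
      have h1 : triE k n i i le_rfl ∈ X (d i i * d i i) := by
        have := hmul (d i i) (d i i)
          (Submodule.mul_mem_mul (hd i i le_rfl) (hd i i le_rfl))
        rwa [triE_mul i i i le_rfl le_rfl] at this
      have := degree_unique hind (triE_ne_zero i i le_rfl) h1 (hd i i le_rfl)
      exact mul_eq_left.mp this
    refine ⟨hdiag, ?_⟩
    have key : ∀ t : ℕ, ∀ i j : Fin n, i ≤ j → (j : ℕ) - (i : ℕ) = t →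
        d (i : ℕ) (j : ℕ) = chainUp d (i : ℕ) (j : ℕ) := by
      intro t
      induction t with
      | zero =>
        intro i j hij h0
        have hle : (i : ℕ) ≤ (j : ℕ) := hij
        have heq : (j : ℕ) = (i : ℕ) := by omega
        rw [heq, hdiag i]
        simp [chainUp]
      | succ t ih =>
        intro i j hij hji
        have hle : (i : ℕ) ≤ (j : ℕ) := hij
        have hlt : (i : ℕ) < (j : ℕ) := by omega
        have hi1 : (i : ℕ) + 1 < n := by
          have := j.2; omega
        set i' : Fin n := ⟨(i : ℕ) + 1, hi1⟩ with hi'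
        have hii' : i ≤ i' := by rw [Fin.le_def]; exact Nat.le_succ _
        have hi'j : i' ≤ j := by rw [Fin.le_def]; exact hlt
        have hmulE : triE k n i i' hii' * triE k n i' j hi'j = triE k n i j hij :=
          triE_mul i i' j hii' hi'j
        have h1 : triE k n i j hij ∈ X (d (i : ℕ) ((i : ℕ) + 1) * d ((i : ℕ) + 1) (j : ℕ)) := by
          have := hmul _ _ (Submodule.mul_mem_mul (hd i i' hii') (hd i' j hi'j))
          rwa [hmulE] at this
        have hstep : d (i : ℕ) (j : ℕ)
            = d (i : ℕ) ((i : ℕ) + 1) * d ((i : ℕ) + 1) (j : ℕ) :=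
          degree_unique hind (triE_ne_zero i j hij) (hd i j hij) h1
        have hih : d ((i : ℕ) + 1) (j : ℕ) = chainUp d ((i : ℕ) + 1) (j : ℕ) :=
          ih i' j hi'j (by show (j : ℕ) - ((i : ℕ) + 1) = t; omega)
        rw [hstep, hih]
        show _ = ((List.range' (i : ℕ) ((j : ℕ) - (i : ℕ))).map
          (fun t => d t (t + 1))).prod
        rw [show (j : ℕ) - (i : ℕ) = ((j : ℕ) - ((i : ℕ) + 1)) + 1 by omega]
        rw [List.range'_succ]
        rw [List.map_cons, List.prod_cons]
        rfl
    exact fun i j hij => key ((j : ℕ) - (i : ℕ)) i j hij rfl
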